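/- For every integer n ≥ 2, the rank-4 quiver L_n (with b_12 = b_23 = 2cos(π/2n), b_31 = 2, b_14 = b_43 = 2cos(π(n−1)/2n), b_24 = 0) is not mutation-equivalent to the rank-4 quiver M_n (with b_12 = b_23 = 2cos(π/2n), b_31 = 2, b_24 = 2cos(π(n−1)/2n), b_14 = b_34 = 0). -/

import Mathlib

open Real

noncomputable section

namespace RealQuiver

variable {n : ℕ}

/-- Mutation of a real quiver (a skew-symmetric real matrix) at vertex `k`. -/
def mutate (B : Matrix (Fin n) (Fin n) ℝ) (k : Fin n) : Matrix (Fin n) (Fin n) ℝ :=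
  fun i j => if i = k ∨ j = k then -B i j
    else B i j + (|B i k| * B k j + B i k * |B k j|) / 2

/-- One mutation step. -/
def MutStep (B C : Matrix (Fin n) (Fin n) ℝ) : Prop := ∃ k, C = mutate B k

/-- `C` is obtained from `B` by a finite sequence of mutations. -/
def Reachable (B C : Matrix (Fin n) (Fin n) ℝ) : Prop :=
  Relation.ReflTransGen MutStep B C

/-- `B` is mutation-finite. -/
def MutationFinite (B : Matrix (Fin n) (Fin n) ℝ) : Prop :=
  {C | Reachable B C}.Finite

/-- Simultaneous permutation of the indices of `B`. -/
def permute (B : Matrix (Fin n) (Fin n) ℝ) (σ : Equiv.Perm (Fin n)) :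
    Matrix (Fin n) (Fin n) ℝ := fun i j => B (σ i) (σ j)

/-- Mutation-equivalence: a finite sequence of mutations followed by a
simultaneous permutation of the indices. -/
def MutEquiv (B C : Matrix (Fin n) (Fin n) ℝ) : Prop :=
  ∃ C' σ, Reachable B C' ∧ C = permute C' σ

/-- The underlying (undirected) graph of a quiver. -/
def toGraph (B : Matrix (Fin n) (Fin n) ℝ) : SimpleGraph (Fin n) where
  Adj i j := i ≠ j ∧ (B i j ≠ 0 ∨ B j i ≠ 0)
  symm := ⟨fun i j h => ⟨h.1.symm, h.2.symm⟩⟩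
  loopless := ⟨fun i h => h.1 rfl⟩

/-- Connectedness of a quiver. -/
def Connected (B : Matrix (Fin n) (Fin n) ℝ) : Prop := (toGraph B).Connected

def IsSkewSymmetric (B : Matrix (Fin n) (Fin n) ℝ) : Prop :=
  ∀ i j, B j i = -B i j

/-- A quiver is cyclic if its directed graph (an arrow `i → j` whenever
`B i j > 0`) contains a directed cycle. -/
def Cyclic (B : Matrix (Fin n) (Fin n) ℝ) : Prop :=
  ∃ i, Relation.TransGen (fun a b => 0 < B a b) i i

def Acyclic (B : Matrix (Fin n) (Fin n) ℝ) : Prop := ¬ Cyclic B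

/-- The rank-3 cyclic quiver `(a,b,c)`: `b₁₂ = a`, `b₂₃ = b`, `b₃₁ = c`. -/
def cyclicQ (a b c : ℝ) : Matrix (Fin 3) (Fin 3) ℝ :=
  !![0, a, -c; -a, 0, b; c, -b, 0]

/-- The rank-3 acyclic quiver `(a,b,-c)`: `b₁₂ = a`, `b₂₃ = b`, `b₁₃ = c`. -/
def acyclicQ (a b c : ℝ) : Matrix (Fin 3) (Fin 3) ℝ :=
  !![0, a, c; -a, 0, b; -c, -b, 0]

/-- `d` is the highest denominator of the mutation class of `B`. -/
def HighestDenom (B : Matrix (Fin n) (Fin n) ℝ) (d : ℕ) : Prop :=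
  (∀ C, MutEquiv B C → ∀ i j, i ≠ j →
    C i j = 0 ∨ ∃ p q : ℕ, 2 * p < q ∧ q ≤ d ∧ |C i j| = 2 * Real.cos (π * p / q)) ∧
  (∃ C, MutEquiv B C ∧ ∃ i j, ∃ p : ℕ, 0 < p ∧ 2 * p < d ∧ Nat.gcd p d = 1 ∧
    |C i j| = 2 * Real.cos (π * p / d))

/-- The rank-4 quiver `L n` (even denominator `d = 2n`):
`b₁₂ = b₂₃ = 2cos(π/2n)`, `b₃₁ = 2`, `b₁₄ = b₄₃ = 2cos(π(n-1)/2n)`, `b₂₄ = 0`. -/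
def Lq (n : ℕ) : Matrix (Fin 4) (Fin 4) ℝ :=
  !![0, 2 * Real.cos (π / (2 * n)), -2, 2 * Real.cos (π * ((n : ℝ) - 1) / (2 * n));
     -(2 * Real.cos (π / (2 * n))), 0, 2 * Real.cos (π / (2 * n)), 0;
     2, -(2 * Real.cos (π / (2 * n))), 0, -(2 * Real.cos (π * ((n : ℝ) - 1) / (2 * n)));
     -(2 * Real.cos (π * ((n : ℝ) - 1) / (2 * n))), 0, 2 * Real.cos (π * ((n : ℝ) - 1) / (2 * n)), 0]

/-- The rank-4 quiver `M n` (even denominator `d = 2n`):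
`b₁₂ = b₂₃ = 2cos(π/2n)`, `b₃₁ = 2`, `b₂₄ = 2cos(π(n-1)/2n)`, `b₁₄ = b₃₄ = 0`. -/
def Mq (n : ℕ) : Matrix (Fin 4) (Fin 4) ℝ :=
  !![0, 2 * Real.cos (π / (2 * n)), -2, 0;
     -(2 * Real.cos (π / (2 * n))), 0, 2 * Real.cos (π / (2 * n)), 2 * Real.cos (π * ((n : ℝ) - 1) / (2 * n));
     2, -(2 * Real.cos (π / (2 * n))), 0, 0;
     0, -(2 * Real.cos (π * ((n : ℝ) - 1) / (2 * n))), 0, 0]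

/-- The rank-4 quiver `O n` (odd denominator `d = 2n+1`):
`b₁₂ = b₂₃ = 2cos(π/d)`, `b₃₁ = 2`, `b₁₄ = b₂₄ = b₄₃ = 2cos(πn/d)`. -/
def Oq (n : ℕ) : Matrix (Fin 4) (Fin 4) ℝ :=
  !![0, 2 * Real.cos (π / (2 * n + 1)), -2, 2 * Real.cos (π * n / (2 * n + 1));
     -(2 * Real.cos (π / (2 * n + 1))), 0, 2 * Real.cos (π / (2 * n + 1)), 2 * Real.cos (π * n / (2 * n + 1));
     2, -(2 * Real.cos (π / (2 * n + 1))), 0, -(2 * Real.cos (π * n / (2 * n + 1)));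
     -(2 * Real.cos (π * n / (2 * n + 1))), -(2 * Real.cos (π * n / (2 * n + 1))), 2 * Real.cos (π * n / (2 * n + 1)), 0]


open Matrix in
private lemma det_transpose' (M : Matrix (Fin 4) (Fin 4) ℝ) : Mᵀ.det = M.det :=
  Matrix.det_transpose M

/-- Auxiliary vector for the mutation matrix. -/
def uvec (B : Matrix (Fin n) (Fin n) ℝ) (k : Fin n) : Fin n → ℝ :=
  fun i => if i = k then -2 else max (-(B i k)) 0

/-- The elementary matrix realizing mutation as congruence. -/
def Emat (B : Matrix (Fin n) (Fin n) ℝ) (k : Fin n) : Matrix (Fin n) (Fin n) ℝ :=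
  1 + Matrix.replicateCol Unit (uvec B k) * Matrix.replicateRow Unit (Pi.single k (1:ℝ))

lemma det_Emat (B : Matrix (Fin n) (Fin n) ℝ) (k : Fin n) : (Emat B k).det = -1 := by
  rw [Emat, Matrix.det_one_add_replicateCol_mul_replicateRow]
  simp [uvec]; norm_num

lemma Emat_apply (B : Matrix (Fin n) (Fin n) ℝ) (k : Fin n) (i j : Fin n) :
    Emat B k i j = (if i = j then (1:ℝ) else 0) + uvec B k i * (if j = k then 1 else 0) := by
  simp [Emat, Matrix.add_apply, Matrix.mul_apply, Matrix.one_apply, Pi.single_apply, mul_ite]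

lemma max_zero_eq (x : ℝ) : max x 0 = (x + |x|) / 2 := by
  rcases abs_cases x with ⟨h, h2⟩ | ⟨h, h2⟩
  · rw [max_eq_left h2, h]; ring
  · rw [max_eq_right (le_of_lt h2), h]; ring

open Matrix in
lemma mutate_eq_conj (B : Matrix (Fin n) (Fin n) ℝ) (hB : IsSkewSymmetric B) (k : Fin n) :
    mutate B k = Emat B k * B * (Emat B k)ᵀ := by
  have hkk : B k k = 0 := by have := hB k k; linarith
  ext i j
  have h1 : (Emat B k * B * (Emat B k)ᵀ) i j
      = B i j + uvec B k i * B k j + B i k * uvec B k j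
        + uvec B k i * B k k * uvec B k j := by
    simp only [Matrix.mul_apply, Matrix.transpose_apply, Emat_apply]
    simp [Finset.sum_mul, Finset.mul_sum, add_mul, mul_add, ite_mul, mul_ite,
      Finset.sum_add_distrib, Finset.sum_ite_eq, Finset.sum_ite_eq']
    ring
  rw [h1, hkk]
  by_cases hik : i = k
  · by_cases hjk : j = k
    · simp [mutate, uvec, hik, hjk, hkk]
    · simp [mutate, uvec, hik, hjk, hkk]; ring
  · by_cases hjk : j = k
    · simp [mutate, uvec, hik, hjk, hkk]; ring
    · have hbjk : B j k = -B k j := hB k j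
      simp only [mutate, uvec, if_neg hik, if_neg hjk, hbjk, neg_neg]
      rw [if_neg (by tauto), max_zero_eq, max_zero_eq]
      simp only [abs_neg]
      ring

lemma mutate_skew (B : Matrix (Fin n) (Fin n) ℝ) (hB : IsSkewSymmetric B) (k : Fin n) :
    IsSkewSymmetric (mutate B k) := by
  intro i j
  by_cases h : i = k ∨ j = k
  · simp only [mutate]
    rw [if_pos (by tauto), if_pos (by tauto), hB i j]
  · simp only [mutate]
    rw [if_neg (by tauto), if_neg (by tauto), hB i j, hB k j, hB i k]
    simp only [abs_neg]
    ring

open Matrix in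
lemma mutate_det (B : Matrix (Fin n) (Fin n) ℝ) (hB : IsSkewSymmetric B) (k : Fin n) :
    (mutate B k).det = B.det := by
  rw [mutate_eq_conj B hB k, Matrix.det_mul, Matrix.det_mul, Matrix.det_transpose, det_Emat]
  ring

lemma reachable_det (B C : Matrix (Fin n) (Fin n) ℝ) (hB : IsSkewSymmetric B)
    (h : Reachable B C) : C.det = B.det ∧ IsSkewSymmetric C := by
  induction h with
  | refl => exact ⟨rfl, hB⟩
  | tail _ hstep ih =>
    obtain ⟨k, rfl⟩ := hstep
    exact ⟨by rw [mutate_det _ ih.2 k, ih.1], mutate_skew _ ih.2 k⟩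

lemma permute_det (C : Matrix (Fin n) (Fin n) ℝ) (σ : Equiv.Perm (Fin n)) :
    (permute C σ).det = C.det := by
  have : permute C σ = C.submatrix σ σ := rfl
  rw [this, Matrix.det_submatrix_equiv_self]

/-- The quivers `L n` and `M n` are not mutation-equivalent. -/
theorem Lq_not_equiv_Mq (n : ℕ) (hn : 2 ≤ n) : ¬ MutEquiv (Lq n) (Mq n) := by
  rintro ⟨C', σ, hreach, heq⟩
  have hLskew : IsSkewSymmetric (Lq n) := by
    intro i j
    fin_cases i <;> fin_cases j <;> norm_num [Lq]
  have hLdet : (Lq n).det = 0 := by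
    rw [Matrix.det_succ_row_zero]
    simp [Fin.sum_univ_succ, Matrix.det_fin_three, Lq, Fin.succAbove]
  have hMdet : (Mq n).det = (2 * (2 * Real.cos (π * ((n : ℝ) - 1) / (2 * n))))^2 := by
    rw [Matrix.det_succ_row_zero]
    simp [Fin.sum_univ_succ, Matrix.det_fin_three, Mq, Fin.succAbove]
    ring
  have hcos : 0 < Real.cos (π * ((n : ℝ) - 1) / (2 * n)) := by
    apply Real.cos_pos_of_mem_Ioo
    have hn1 : (1:ℝ) ≤ (n:ℝ) - 1 := by
      have : (2:ℝ) ≤ (n:ℝ) := by exact_mod_cast hn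
      linarith
    have hnpos : (0:ℝ) < (n:ℝ) := by positivity
    constructor
    · have : 0 ≤ π * ((n : ℝ) - 1) / (2 * n) := by positivity
      linarith [Real.pi_pos]
    · rw [div_lt_iff₀ (by positivity)]
      have h1 : π * ((n:ℝ) - 1) < π * (n:ℝ) := by
        apply mul_lt_mul_of_pos_left _ Real.pi_pos
        linarith
      calc π * ((n:ℝ) - 1) < π * (n:ℝ) := h1
        _ = π / 2 * (2 * (n:ℝ)) := by ring
  have h1 : (Mq n).det = (Lq n).det := by
    rw [heq, permute_det, (reachable_det _ _ hLskew hreach).1]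
  rw [hLdet, hMdet] at h1
  have : (0:ℝ) < (2 * (2 * Real.cos (π * ((n : ℝ) - 1) / (2 * n))))^2 := by positivity
  linarith

end RealQuiver
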